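/- The distribution D assigns equal probability to any two strings with the same image size: for all Z, Z' ∈ [M]^N with |Im(Z)| = |Im(Z')|, Pr_D[{Z}] = Pr_D[{Z'}]. Consequently, for every s < M with Pr_D[|Im| = s] > 0, the conditional distribution of D given |Im(Z)| = s coincides with the conditional distribution of the uniform distribution U given |Im(X)| = s (both being uniform on {W ∈ [M]^N : |Im(W)| = s}). -/

import Mathlib

namespace GLN

noncomputable section

open Finset

/-- `M = 2^m`. -/
def MM (m : ℕ) : ℕ := 2 ^ m

/-- `N = ⌈M · m · ln 2⌉`. -/
def NN (m : ℕ) : ℕ := ⌈(MM m : ℝ) * m * Real.log 2⌉₊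

/-- Strings `X ∈ [M]^N`. -/
abbrev Str (m : ℕ) := Fin (NN m) → Fin (MM m)

/-- The uniform probability mass function on `[M]^N`. -/
def umass (m : ℕ) (_X : Str m) : ℝ := 1 / (MM m : ℝ) ^ NN m

/-- The image `Im(X) ⊆ [M]` of a string, as a finset. -/
def img {m : ℕ} (X : Str m) : Finset (Fin (MM m)) := Finset.image X Finset.univ

/-- Transition kernel of `D_y(X)`: each coordinate with `x_i = y` is replaced by a uniform
independent sample from `[M] \ {y}`; other coordinates are unchanged. -/
def kerDy (m : ℕ) (y : Fin (MM m)) (X Z : Str m) : ℝ :=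
  ∏ i, if X i = y then (if Z i = y then 0 else 1 / ((MM m : ℝ) - 1))
       else (if Z i = X i then 1 else 0)

/-- Transition kernel of `D(X)`: choose `y` uniformly in `[M]`, then apply `D_y`. -/
def kerD (m : ℕ) (X Z : Str m) : ℝ := (1 / (MM m : ℝ)) * ∑ y, kerDy m y X Z

/-- The probability mass function of the distribution `D = D(U)`. -/
def dmass (m : ℕ) (Z : Str m) : ℝ := ∑ X, umass m X * kerD m X Z

/-- Transition kernel of `D_y^inv(Z)`: each coordinate is independently replaced by `y`
with probability `1/M` and left unchanged otherwise. -/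
def kerDinvy (m : ℕ) (y : Fin (MM m)) (Z W : Str m) : ℝ :=
  ∏ i, ((1 / (MM m : ℝ)) * (if W i = y then 1 else 0)
        + (1 - 1 / (MM m : ℝ)) * (if W i = Z i then 1 else 0))

/-- Transition kernel of `D^inv(Z)`: choose `y` uniformly in `[M] \ Im(Z)`,
then apply `D_y^inv`. -/
def kerDinv (m : ℕ) (Z W : Str m) : ℝ :=
  (1 / (((img Z)ᶜ.card : ℝ))) * ∑ y ∈ (img Z)ᶜ, kerDinvy m y Z W

/-- Probability of an event under a mass function. -/
def pr {m : ℕ} (μ : Str m → ℝ) (E : Set (Str m)) : ℝ := ∑ X, E.indicator μ X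

/-- Expectation of a real function under a mass function. -/
def ev {m : ℕ} (μ : Str m → ℝ) (g : Str m → ℝ) : ℝ := ∑ X, μ X * g X

/-- The surjectivity function `f_Surj`. -/
def fSurjB (m : ℕ) (X : Str m) : Bool := decide (img X = Finset.univ)

/-- The `q.2`-th bit of the binary encoding of coordinate `x_{q.1}` of `X`;
this realizes `X` as a string of `n = N·m` bits. -/
def bit {m : ℕ} (X : Str m) (q : Fin (NN m) × Fin m) : Bool :=
  Nat.testBit (X q.1).val q.2.val

lemma hM2 (m : ℕ) (hm : 1 ≤ m) : (2:ℝ) ≤ (MM m : ℝ) := by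
  have : (2:ℕ) ≤ MM m := by
    calc (2:ℕ) = 2^1 := rfl
    _ ≤ 2^m := Nat.pow_le_pow_right (by norm_num) hm
  exact_mod_cast this

lemma coord_sum (m : ℕ) (hm : 1 ≤ m) (y z : Fin (MM m)) :
    ∑ x : Fin (MM m), (if x = y then (if z = y then (0:ℝ) else 1/((MM m:ℝ)-1))
      else (if z = x then 1 else 0))
    = if z = y then 0 else (MM m : ℝ)/((MM m:ℝ)-1) := by
  have h1 : ((MM m:ℝ)-1) ≠ 0 := by have := hM2 m hm; linarith
  rw [Finset.sum_eq_sum_sdiff_singleton_add (mem_univ y)]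
  rw [if_pos rfl]
  have hrest : ∑ x ∈ univ \ {y}, (if x = y then (if z = y then (0:ℝ) else 1/((MM m:ℝ)-1))
      else (if z = x then 1 else 0)) = ∑ x ∈ univ \ {y}, (if z = x then (1:ℝ) else 0) := by
    apply Finset.sum_congr rfl
    intro x hx
    rw [if_neg (by simpa using (Finset.mem_sdiff.mp hx).2)]
  rw [hrest, Finset.sum_ite_eq (univ \ {y}) z (fun _ => (1:ℝ))]
  by_cases hz : z = y
  · simp [hz]
  · rw [if_pos (by simp [hz]), if_neg hz, if_neg hz]
    field_simp
    ring

lemma sum_kerDy (m : ℕ) (hm : 1 ≤ m) (y : Fin (MM m)) (Z : Str m) :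
    ∑ X : Str m, kerDy m y X Z =
      if y ∈ img Z then 0 else ((MM m : ℝ)/((MM m:ℝ)-1))^(NN m) := by
  unfold kerDy
  rw [← Fintype.prod_sum (fun i x => if x = y then (if Z i = y then (0:ℝ) else 1/((MM m:ℝ)-1))
      else (if Z i = x then 1 else 0))]
  by_cases hy : y ∈ img Z
  · rw [if_pos hy]
    obtain ⟨i, _, hi⟩ := Finset.mem_image.mp hy
    apply Finset.prod_eq_zero (mem_univ i)
    rw [coord_sum m hm, if_pos hi]
  · rw [if_neg hy]
    have h : ∀ i ∈ univ, (∑ x : Fin (MM m), (if x = y then (if Z i = y then (0:ℝ) else 1/((MM m:ℝ)-1))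
        else (if Z i = x then 1 else 0))) = (MM m : ℝ)/((MM m:ℝ)-1) := by
      intro i _
      rw [coord_sum m hm, if_neg (fun h => hy (Finset.mem_image.mpr ⟨i, mem_univ i, h⟩))]
    rw [Finset.prod_congr rfl h, Finset.prod_const, card_univ, Fintype.card_fin]

lemma dmass_eq (m : ℕ) (hm : 1 ≤ m) (Z : Str m) :
    dmass m Z = (1/(MM m:ℝ)^(NN m)) * (1/(MM m:ℝ)) * ((img Z)ᶜ.card : ℝ)
      * ((MM m:ℝ)/((MM m:ℝ)-1))^(NN m) := by
  unfold dmass kerD umass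
  simp_rw [← Finset.mul_sum, ← mul_assoc]
  rw [Finset.sum_comm]
  have h : ∀ y ∈ (univ : Finset (Fin (MM m))), ∑ X : Str m, kerDy m y X Z =
      if y ∈ img Z then (0:ℝ) else ((MM m : ℝ)/((MM m:ℝ)-1))^(NN m) :=
    fun y _ => sum_kerDy m hm y Z
  rw [Finset.sum_congr rfl h]
  have h2 : ∑ y : Fin (MM m), (if y ∈ img Z then (0:ℝ) else ((MM m : ℝ)/((MM m:ℝ)-1))^(NN m))
      = ((img Z)ᶜ.card : ℝ) * ((MM m : ℝ)/((MM m:ℝ)-1))^(NN m) := by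
    rw [Finset.sum_ite, Finset.sum_const, Finset.sum_const, smul_zero, zero_add,
      Finset.filter_not, Finset.filter_mem_eq_inter, Finset.univ_inter, nsmul_eq_mul]
    rfl
  rw [h2]; ring

/-- `D` assigns equal probability to any two strings with the same image size;
consequently, for every `s < M` with `Pr_D[|Im| = s] > 0`, conditioned on `|Im| = s` the
distributions `D` and `U` coincide, both being uniform on `{W : |Im(W)| = s}`. -/
theorem stmt10 (m : ℕ) (hm : 1 ≤ m) :
    (∀ Z Z' : Str m, (img Z).card = (img Z').card → dmass m Z = dmass m Z') ∧
    (∀ s : ℕ, s < MM m → 0 < pr (dmass m) {X : Str m | (img X).card = s} →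
      ∀ W : Str m, (img W).card = s →
        dmass m W / pr (dmass m) {X : Str m | (img X).card = s} =
          umass m W / pr (umass m) {X : Str m | (img X).card = s} ∧
        dmass m W / pr (dmass m) {X : Str m | (img X).card = s} =
          1 / ((Finset.univ.filter fun X : Str m => (img X).card = s).card : ℝ)) := by
  have part1 : ∀ Z Z' : Str m, (img Z).card = (img Z').card → dmass m Z = dmass m Z' := by
    intro Z Z' h
    rw [dmass_eq m hm Z, dmass_eq m hm Z', Finset.card_compl, Finset.card_compl, h]
  refine ⟨part1, ?_⟩
  intro s _hs hpos W hW
  set E : Set (Str m) := {X : Str m | (img X).card = s} with hE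
  set F : Finset (Str m) := Finset.univ.filter (fun X : Str m => (img X).card = s) with hF
  have hprE : ∀ μ : Str m → ℝ, pr μ E = ∑ X ∈ F, μ X := by
    intro μ
    unfold pr
    rw [hF, Finset.sum_filter]
    apply Finset.sum_congr rfl
    intro X _
    simp [hE, Set.indicator_apply]
  have hd : pr (dmass m) E = (F.card : ℝ) * dmass m W := by
    rw [hprE]
    rw [Finset.sum_congr rfl (fun X hX => part1 X W
      (((Finset.mem_filter.mp hX).2).trans hW.symm))]
    rw [Finset.sum_const, nsmul_eq_mul]
  have hu : pr (umass m) E = (F.card : ℝ) * umass m W := by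
    rw [hprE]
    simp [umass, mul_comm]
  have hM : (2:ℝ) ≤ (MM m : ℝ) := hM2 m hm
  have huW : 0 < umass m W := by
    unfold umass
    positivity
  have hmul : (0:ℝ) < (F.card : ℝ) * dmass m W := by rw [← hd]; exact hpos
  have hFc : (0:ℝ) < (F.card : ℝ) := by
    rcases mul_pos_iff.mp hmul with ⟨h1, _⟩ | ⟨h1, _⟩
    · exact h1
    · exact absurd h1 (not_lt.mpr (Nat.cast_nonneg _))
  have hdW : 0 < dmass m W := by
    rcases mul_pos_iff.mp hmul with ⟨_, h2⟩ | ⟨h1, _⟩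
    · exact h2
    · exact absurd h1 (not_lt.mpr (Nat.cast_nonneg _))
  have key : ∀ a : ℝ, 0 < a → a / ((F.card : ℝ) * a) = 1 / (F.card : ℝ) := by
    intro a ha
    field_simp
  constructor
  · rw [hd, hu, key _ hdW, key _ huW]
  · rw [hd, key _ hdW]

end
end GLN
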